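/- arXiv:2409.16234 — 4 statements merged into one kernel-verified Lean document; each statement's English description precedes it below -/
import Mathlib

section
/- Let n ≥ 1 and r ≥ 1, let α(0), …, α(r) ∈ ℕ^n be affinely independent points, let λ_0, …, λ_r ∈ (0,1) with λ_0 + … + λ_r = 1 be such that β := λ_0·α(0) + … + λ_r·α(r) lies in ℕ^n, let c_0, …, c_r > 0 be real and c_β ∈ ℝ. Define the circuit number Θ = ∏_{i=0}^{r} (c_i/λ_i)^{λ_i}. Then the polynomial f(x) = c_β·x^β + Σ_{i=0}^{r} c_i·x^{α(i)} satisfies f(x) ≥ 0 for all x ∈ ℝ_{>0}^n if and only if −c_β ≤ Θ. -/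
private lemma circuit_prod_exp_pow {n : ℕ} (y : Fin n → ℝ) (a : Fin n → ℕ) :
    ∏ j, Real.exp (y j) ^ (a j) = Real.exp (∑ j, (a j : ℝ) * y j) := by
  rw [Real.exp_sum]
  exact Finset.prod_congr rfl fun j _ => by
    rw [← Real.exp_nat_mul]

/-- Nonnegativity of a circuit polynomial on the positive orthant is
equivalent to `-c_β ≤ Θ`, where `Θ` is the circuit number. -/
theorem circuit_polynomial_nonneg_iff_circuit_number
    (n r : ℕ) (hn : 1 ≤ n) (hr : 1 ≤ r)
    (α : Fin (r + 1) → Fin n → ℕ)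
    (hα : AffineIndependent ℝ (fun i : Fin (r + 1) => (fun j : Fin n => (α i j : ℝ))))
    (lam : Fin (r + 1) → ℝ)
    (hlam : ∀ i, 0 < lam i ∧ lam i < 1)
    (hsum : ∑ i, lam i = 1)
    (β : Fin n → ℕ)
    (hβ : ∀ j, (β j : ℝ) = ∑ i, lam i * (α i j : ℝ))
    (c : Fin (r + 1) → ℝ) (hc : ∀ i, 0 < c i) (cβ : ℝ) :
    (∀ x : Fin n → ℝ, (∀ j, 0 < x j) →
        0 ≤ cβ * ∏ j, x j ^ (β j) + ∑ i, c i * ∏ j, x j ^ (α i j)) ↔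
      -cβ ≤ ∏ i, (c i / lam i) ^ (lam i) := by
  have hcl : ∀ i, 0 < c i / lam i := fun i => div_pos (hc i) (hlam i).1
  have hΘ : 0 < ∏ i, (c i / lam i) ^ (lam i) :=
    Finset.prod_pos fun i _ => Real.rpow_pos_of_pos (hcl i) _
  set Θ : ℝ := ∏ i, (c i / lam i) ^ (lam i) with hΘdef
  -- key computation: for x = exp ∘ y, the β-monomial is exp (∑ i, lam i * A i)
  have hbeta : ∀ y : Fin n → ℝ,
      ∏ j, Real.exp (y j) ^ (β j)
        = Real.exp (∑ i, lam i * ∑ j, (α i j : ℝ) * y j) := by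
    intro y
    rw [circuit_prod_exp_pow]
    congr 1
    have h1 : ∀ j, ((β j : ℝ)) * y j = ∑ i, lam i * ((α i j : ℝ) * y j) := by
      intro j
      rw [hβ j, Finset.sum_mul]
      exact Finset.sum_congr rfl fun i _ => by ring
    rw [Finset.sum_congr rfl fun j (_ : j ∈ Finset.univ) => h1 j, Finset.sum_comm]
    exact Finset.sum_congr rfl fun i _ => by rw [Finset.mul_sum]
  constructor
  · -- hard direction
    intro hpos
    -- linear independence of rows
    have hli : LinearIndependent ℝ
        (fun i : Fin r => (fun j : Fin n => ((α i.succ j : ℝ) - (α 0 j : ℝ)))) := by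
      rw [affineIndependent_iff_linearIndependent_vsub ℝ _ 0] at hα
      have := hα.comp (fun i : Fin r => (⟨i.succ, Fin.succ_ne_zero i⟩ : {x : Fin (r+1) // x ≠ 0}))
        (fun a b hab => by
          simpa using Fin.succ_injective _ (congrArg Subtype.val hab))
      exact this
    set M : Matrix (Fin r) (Fin n) ℝ :=
      Matrix.of (fun i j => (α i.succ j : ℝ) - (α 0 j : ℝ)) with hM
    have hrank : M.rank = r := by
      have := hli.rank_matrix (M := M)
      simpa using this
    have hsurj : Function.Surjective M.mulVec := by
      have h1 : LinearMap.range M.mulVecLin = ⊤ := by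
        apply Submodule.eq_top_of_finrank_eq
        have h2 : Module.finrank ℝ (Fin r → ℝ) = r := by simp
        rw [h2]
        exact hrank
      intro t
      obtain ⟨y, hy⟩ := LinearMap.range_eq_top.mp h1 t
      exact ⟨y, hy⟩
    obtain ⟨y, hy⟩ := hsurj (fun i =>
      Real.log (lam i.succ / c i.succ) - Real.log (lam 0 / c 0))
    set A : Fin (r + 1) → ℝ := fun i => ∑ j, (α i j : ℝ) * y j with hA
    have hAk : ∀ i, A i + Real.log (c i / lam i) = A 0 + Real.log (c 0 / lam 0) := by
      intro i
      induction i using Fin.cases with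
      | zero => rfl
      | succ k =>
        have hk := congrFun hy k
        have hmv : M.mulVec y k = A k.succ - A 0 := by
          simp only [Matrix.mulVec, dotProduct, hM, Matrix.of_apply, hA]
          rw [← Finset.sum_sub_distrib]
          exact Finset.sum_congr rfl fun j _ => by ring
        rw [hmv] at hk
        have hl1 : Real.log (lam k.succ / c k.succ) = - Real.log (c k.succ / lam k.succ) := by
          rw [← Real.log_inv, inv_div]
        have hl2 : Real.log (lam 0 / c 0) = - Real.log (c 0 / lam 0) := by
          rw [← Real.log_inv, inv_div]
        rw [hl1, hl2] at hk
        linarith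
    set K : ℝ := A 0 + Real.log (c 0 / lam 0) with hK
    set x : Fin n → ℝ := fun j => Real.exp (y j) with hx
    have hmono : ∀ i, c i * ∏ j, x j ^ (α i j) = lam i * Real.exp K := by
      intro i
      rw [hx]
      simp only []
      rw [circuit_prod_exp_pow]
      have hne : lam i ≠ 0 := (hlam i).1.ne'
      have : c i * Real.exp (A i) = lam i * ((c i / lam i) * Real.exp (A i)) := by
        field_simp
      rw [this, ← Real.exp_log (hcl i), ← Real.exp_add, add_comm, hAk i]
    have hsum' : ∑ i, c i * ∏ j, x j ^ (α i j) = Real.exp K := by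
      rw [Finset.sum_congr rfl fun i _ => hmono i, ← Finset.sum_mul, hsum, one_mul]
    have hlogΘ : Real.log Θ = ∑ i, lam i * Real.log (c i / lam i) := by
      rw [hΘdef, Real.log_prod (fun i _ => (Real.rpow_pos_of_pos (hcl i) _).ne')]
      exact Finset.sum_congr rfl fun i _ => Real.log_rpow (hcl i) _
    have hxβ : ∏ j, x j ^ (β j) = Real.exp K / Θ := by
      rw [hx]
      simp only []
      rw [hbeta]
      have h3 : ∑ i, lam i * A i = K - Real.log Θ := by
        have h4 : ∀ i, lam i * A i = lam i * K - lam i * Real.log (c i / lam i) := by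
          intro i
          have h5 := hAk i
          have h6 : A i = K - Real.log (c i / lam i) := by linarith
          rw [h6]; ring
        rw [Finset.sum_congr rfl fun i _ => h4 i, Finset.sum_sub_distrib, ← Finset.sum_mul,
          hsum, one_mul, hlogΘ]
      rw [h3, Real.exp_sub, Real.exp_log hΘ]
    have hfinal := hpos x (fun j => Real.exp_pos _)
    rw [hxβ, hsum'] at hfinal
    have hV := Real.exp_pos K
    rw [div_eq_mul_inv] at hfinal
    have h8 := mul_nonneg hfinal hΘ.le
    have h9 : (cβ * (Real.exp K * Θ⁻¹) + Real.exp K) * Θ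
        = cβ * Real.exp K * (Θ⁻¹ * Θ) + Real.exp K * Θ := by ring
    rw [h9, inv_mul_cancel₀ hΘ.ne', mul_one] at h8
    nlinarith [h8, hV]
  · -- easy direction: AM-GM
    intro h x hx
    set y : Fin n → ℝ := fun j => Real.log (x j) with hy
    have hxy : x = fun j => Real.exp (y j) := by
      funext j; rw [hy]; simp only []; rw [Real.exp_log (hx j)]
    set A : Fin (r + 1) → ℝ := fun i => ∑ j, (α i j : ℝ) * y j with hA
    have hmono : ∀ i, ∏ j, x j ^ (α i j) = Real.exp (A i) := by
      intro i; rw [hxy]; exact circuit_prod_exp_pow y (α i)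
    have hxβ : ∏ j, x j ^ (β j) = Real.exp (∑ i, lam i * A i) := by
      rw [hxy]; exact hbeta y
    have hamgm := Real.geom_mean_le_arith_mean_weighted Finset.univ lam
      (fun i => (c i / lam i) * Real.exp (A i)) (fun i _ => (hlam i).1.le) hsum
      (fun i _ => (mul_pos (hcl i) (Real.exp_pos _)).le)
    have hlhs : ∏ i, ((c i / lam i) * Real.exp (A i)) ^ (lam i)
        = Θ * ∏ j, x j ^ (β j) := by
      rw [hxβ]
      rw [Finset.prod_congr rfl (fun i (_ : i ∈ Finset.univ) =>
        Real.mul_rpow (hcl i).le (Real.exp_pos (A i)).le), Finset.prod_mul_distrib]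
      congr 1
      refine (Finset.prod_congr rfl fun i (_ : i ∈ Finset.univ) => ?_).trans
        (Real.exp_sum _ _).symm
      rw [← Real.exp_mul, mul_comm (A i) (lam i)]
    have hrhs : ∑ i, lam i * ((c i / lam i) * Real.exp (A i))
        = ∑ i, c i * ∏ j, x j ^ (α i j) := by
      refine Finset.sum_congr rfl fun i _ => ?_
      rw [hmono i, ← mul_assoc, mul_div_cancel₀ _ (hlam i).1.ne']
    rw [hlhs, hrhs] at hamgm
    have hxβpos : 0 < ∏ j, x j ^ (β j) :=
      Finset.prod_pos fun j _ => pow_pos (hx j) _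
    nlinarith [hxβpos, hamgm]
end

section
/- Let K1, K2, K3, K4, κ3, κ6, κ9, κ12 > 0 be real parameters with a(η) := κ3·κ12 − κ6·κ9 > 0 and b(η) := (K2+K3)·κ3·κ12 − (K1+K4)·κ6·κ9. Then the polynomial f(x1,x3) = b(η)·K1·K2·K3·κ3·κ6·κ12·x1^2·x3 + K1^2·K2·K3·K4·κ3·κ6^2·κ9·κ12·x1^2 + K1^2·K3^2·κ6^3·κ12^2·x3 + a(η)·K2^2·K4·κ3^2·κ9·x1^4·x3^2 satisfies f(x1,x3) ≥ 0 for all x1 > 0, x3 > 0 if and only if −b(η)·K1·K2·K3·κ3·κ6·κ12 ≤ 3·K1·K2·K3·κ3·κ6·κ12·(K1·K4^2·κ6^2·κ9^2·a(η))^{1/3}. -/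
lemma cube_inj' {x y : ℝ} (hx : 0 ≤ x) (hy : 0 ≤ y) (h : x ^ 3 = y ^ 3) : x = y :=
  (pow_left_strictMonoOn₀ (n := 3) (by norm_num) : StrictMonoOn (fun x : ℝ => x ^ 3) (Set.Ici 0)).injOn hx hy h

lemma amgm3' {p q s t : ℝ} (hp : 0 ≤ p) (hq : 0 ≤ q) (hs : 0 ≤ s) (ht : 0 ≤ t)
    (h : p * q * s = t ^ 3) : 3 * t ≤ p + q + s := by
  set α := p ^ ((1:ℝ)/3) with hα
  set β := q ^ ((1:ℝ)/3) with hβ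
  set γ := s ^ ((1:ℝ)/3) with hγ
  have hα0 : 0 ≤ α := Real.rpow_nonneg hp _
  have hβ0 : 0 ≤ β := Real.rpow_nonneg hq _
  have hγ0 : 0 ≤ γ := Real.rpow_nonneg hs _
  have hα3 : α ^ 3 = p := by
    rw [hα, ← Real.rpow_natCast (p ^ ((1:ℝ)/3)) 3, ← Real.rpow_mul hp]; norm_num
  have hβ3 : β ^ 3 = q := by
    rw [hβ, ← Real.rpow_natCast (q ^ ((1:ℝ)/3)) 3, ← Real.rpow_mul hq]; norm_num
  have hγ3 : γ ^ 3 = s := by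
    rw [hγ, ← Real.rpow_natCast (s ^ ((1:ℝ)/3)) 3, ← Real.rpow_mul hs]; norm_num
  have habc : α * β * γ = t := by
    apply cube_inj' (by positivity) ht
    rw [mul_pow, mul_pow, hα3, hβ3, hγ3, h]
  rw [← hα3, ← hβ3, ← hγ3, ← habc]
  nlinarith [mul_nonneg (add_nonneg (add_nonneg hα0 hβ0) hγ0) (sq_nonneg (α - β)),
    mul_nonneg (add_nonneg (add_nonneg hα0 hβ0) hγ0) (sq_nonneg (β - γ)),
    mul_nonneg (add_nonneg (add_nonneg hα0 hβ0) hγ0) (sq_nonneg (α - γ))]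

lemma circuit_key {A B C θ : ℝ} (hA : 0 < A) (hB : 0 < B) (hC : 0 < C) :
    (∀ x1 x3 : ℝ, 0 < x1 → 0 < x3 →
      0 ≤ θ * x1 ^ 2 * x3 + A * x1 ^ 2 + B * x3 + C * x1 ^ 4 * x3 ^ 2) ↔
    -θ ≤ 3 * (A * B * C) ^ ((1:ℝ)/3) := by
  set r := (A * B * C) ^ ((1:ℝ)/3) with hrdef
  have hr : 0 < r := Real.rpow_pos_of_pos (by positivity) _
  have hr3 : r ^ 3 = A * B * C := by
    rw [hrdef, ← Real.rpow_natCast ((A*B*C) ^ ((1:ℝ)/3)) 3, ← Real.rpow_mul (by positivity)]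
    norm_num
  constructor
  · intro H
    set x1 : ℝ := (B ^ 2 / (A * C)) ^ ((1:ℝ)/6) with hx1def
    have hx1 : 0 < x1 := Real.rpow_pos_of_pos (by positivity) _
    have h6 : x1 ^ 6 = B ^ 2 / (A * C) := by
      rw [hx1def, ← Real.rpow_natCast ((B^2/(A*C)) ^ ((1:ℝ)/6)) 6,
        ← Real.rpow_mul (by positivity)]
      norm_num
    have hx12 : x1 ^ 2 = B / r := by
      apply cube_inj' (by positivity) (by positivity)
      have : (x1 ^ 2) ^ 3 = x1 ^ 6 := by ring
      rw [this, h6, div_pow]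
      rw [div_eq_div_iff (by positivity) (by positivity)]
      linear_combination B ^ 2 * hr3
    have H' := H x1 (A / r) hx1 (by positivity)
    have hx14 : x1 ^ 4 = (B / r) ^ 2 := by
      rw [show x1 ^ 4 = (x1 ^ 2) ^ 2 by ring, hx12]
    rw [hx12, hx14] at H'
    have hABr : 0 ≤ (θ + 3 * r) * (A * B) := by
      have h4 : (0:ℝ) ≤ (θ * (B / r) * (A / r) + A * (B / r) + B * (A / r)
          + C * ((B / r) ^ 2) * (A / r) ^ 2) * r ^ 4 :=
        mul_nonneg H' (by positivity)
      have heq : (θ * (B / r) * (A / r) + A * (B / r) + B * (A / r)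
          + C * ((B / r) ^ 2) * (A / r) ^ 2) * r ^ 4
          = (θ + 3 * r) * (A * B) * r ^ 2 + A * B * (C * A * B - r ^ 3) := by
        field_simp
        ring
      rw [heq] at h4
      have : A * B * (C * A * B - r ^ 3) = 0 := by rw [hr3]; ring
      rw [this, add_zero] at h4
      exact (mul_nonneg_iff_of_pos_right (pow_pos hr 2)).mp h4
    nlinarith [hABr, mul_pos hA hB]
  · intro h x1 x3 hx1 hx3
    have hgm : 3 * (r * (x1 ^ 2 * x3)) ≤ A * x1 ^ 2 + B * x3 + C * x1 ^ 4 * x3 ^ 2 := by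
      apply amgm3' (by positivity) (by positivity) (by positivity) (by positivity)
      linear_combination -(x1 ^ 6 * x3 ^ 3) * hr3
    have hm : -θ * (x1 ^ 2 * x3) ≤ 3 * r * (x1 ^ 2 * x3) :=
      mul_le_mul_of_nonneg_right h (by positivity)
    nlinarith [hgm, hm]



/-- The circuit polynomial `f_{η,H}` from Example 3.3 is nonnegative on the
positive orthant if and only if
`−b(η)·K1·K2·K3·κ3·κ6·κ12 ≤ 3·K1·K2·K3·κ3·κ6·κ12·(K1·K4²·κ6²·κ9²·a(η))^{1/3}`. -/
theorem circuit_f_etaH_nonneg_iff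
    (K1 K2 K3 K4 κ3 κ6 κ9 κ12 : ℝ)
    (hK1 : 0 < K1) (hK2 : 0 < K2) (hK3 : 0 < K3) (hK4 : 0 < K4)
    (hκ3 : 0 < κ3) (hκ6 : 0 < κ6) (hκ9 : 0 < κ9) (hκ12 : 0 < κ12)
    (ha : 0 < κ3 * κ12 - κ6 * κ9) :
    (∀ x1 x3 : ℝ, 0 < x1 → 0 < x3 →
        0 ≤ ((K2 + K3) * κ3 * κ12 - (K1 + K4) * κ6 * κ9) * K1 * K2 * K3 * κ3 * κ6 * κ12
              * x1 ^ 2 * x3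
            + K1 ^ 2 * K2 * K3 * K4 * κ3 * κ6 ^ 2 * κ9 * κ12 * x1 ^ 2
            + K1 ^ 2 * K3 ^ 2 * κ6 ^ 3 * κ12 ^ 2 * x3
            + (κ3 * κ12 - κ6 * κ9) * K2 ^ 2 * K4 * κ3 ^ 2 * κ9 * x1 ^ 4 * x3 ^ 2) ↔
      -(((K2 + K3) * κ3 * κ12 - (K1 + K4) * κ6 * κ9) * K1 * K2 * K3 * κ3 * κ6 * κ12)
        ≤ 3 * K1 * K2 * K3 * κ3 * κ6 * κ12
            * (K1 * K4 ^ 2 * κ6 ^ 2 * κ9 ^ 2 * (κ3 * κ12 - κ6 * κ9)) ^ ((1 : ℝ) / 3) := by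
  have hA : (0:ℝ) < K1 ^ 2 * K2 * K3 * K4 * κ3 * κ6 ^ 2 * κ9 * κ12 := by positivity
  have hB : (0:ℝ) < K1 ^ 2 * K3 ^ 2 * κ6 ^ 3 * κ12 ^ 2 := by positivity
  have hC : (0:ℝ) < (κ3 * κ12 - κ6 * κ9) * K2 ^ 2 * K4 * κ3 ^ 2 * κ9 := by positivity
  have hk := circuit_key
    (θ := ((K2 + K3) * κ3 * κ12 - (K1 + K4) * κ6 * κ9) * K1 * K2 * K3 * κ3 * κ6 * κ12)
    hA hB hC
  have hEq : 3 * (K1 ^ 2 * K2 * K3 * K4 * κ3 * κ6 ^ 2 * κ9 * κ12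
        * (K1 ^ 2 * K3 ^ 2 * κ6 ^ 3 * κ12 ^ 2)
        * ((κ3 * κ12 - κ6 * κ9) * K2 ^ 2 * K4 * κ3 ^ 2 * κ9)) ^ ((1:ℝ)/3)
      = 3 * K1 * K2 * K3 * κ3 * κ6 * κ12
        * (K1 * K4 ^ 2 * κ6 ^ 2 * κ9 ^ 2 * (κ3 * κ12 - κ6 * κ9)) ^ ((1 : ℝ) / 3) := by
    have h1 : (K1 ^ 2 * K2 * K3 * K4 * κ3 * κ6 ^ 2 * κ9 * κ12
        * (K1 ^ 2 * K3 ^ 2 * κ6 ^ 3 * κ12 ^ 2)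
        * ((κ3 * κ12 - κ6 * κ9) * K2 ^ 2 * K4 * κ3 ^ 2 * κ9)) ^ ((1:ℝ)/3)
        = K1 * K2 * K3 * κ3 * κ6 * κ12
          * (K1 * K4 ^ 2 * κ6 ^ 2 * κ9 ^ 2 * (κ3 * κ12 - κ6 * κ9)) ^ ((1 : ℝ) / 3) := by
      apply cube_inj' (Real.rpow_nonneg (by positivity) _) (by positivity)
      rw [← Real.rpow_natCast (_ ^ ((1:ℝ)/3)) 3, ← Real.rpow_mul (by positivity)]
      rw [mul_pow, ← Real.rpow_natCast ((K1 * K4 ^ 2 * κ6 ^ 2 * κ9 ^ 2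
          * (κ3 * κ12 - κ6 * κ9)) ^ ((1:ℝ)/3)) 3, ← Real.rpow_mul (by positivity)]
      norm_num
      ring
    rw [h1]; ring
  rw [hk, hEq]
end

section
/- Every pure cover of V consists either of exactly five 2-element subsets, or of exactly two 2-element subsets and exactly two 3-element subsets. -/
/-- The lattice points of the hexagon with vertices `(0,0), (2,0), (4,1), (4,2), (2,2), (0,1)`,
other than the center point `m = (2,1)`. -/
noncomputable def hexV : Finset (ℝ × ℝ) :=
  {(0, 0), (2, 0), (4, 1), (4, 2), (2, 2), (0, 1), (1, 0), (3, 2), (1, 1), (3, 1)}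

/-- A pure cover: a partition of `hexV` into subsets `S` of cardinality 2 or 3 whose points
are affinely independent and such that `(2,1)` lies in the relative interior of the
convex hull of `S`. -/
def IsPureCover (P : Finset (Finset (ℝ × ℝ))) : Prop :=
  (∀ S ∈ P, S ⊆ hexV ∧ (S.card = 2 ∨ S.card = 3) ∧
      AffineIndependent ℝ (fun p : (S : Set (ℝ × ℝ)) => (p : ℝ × ℝ)) ∧
      ((2, 1) : ℝ × ℝ) ∈ intrinsicInterior ℝ (convexHull ℝ (S : Set (ℝ × ℝ)))) ∧
    (∀ v ∈ hexV, ∃! S, S ∈ P ∧ v ∈ S)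

set_option maxHeartbeats 4000000 in
lemma hexV_card : hexV.card = 10 := by
  rw [hexV]
  rw [Finset.card_insert_of_notMem (by norm_num [Prod.ext_iff]),
      Finset.card_insert_of_notMem (by norm_num [Prod.ext_iff]),
      Finset.card_insert_of_notMem (by norm_num [Prod.ext_iff]),
      Finset.card_insert_of_notMem (by norm_num [Prod.ext_iff]),
      Finset.card_insert_of_notMem (by norm_num [Prod.ext_iff]),
      Finset.card_insert_of_notMem (by norm_num [Prod.ext_iff]),
      Finset.card_insert_of_notMem (by norm_num [Prod.ext_iff]),
      Finset.card_insert_of_notMem (by norm_num [Prod.ext_iff]),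
      Finset.card_insert_of_notMem (by norm_num [Prod.ext_iff])]
  rfl

/-- Every pure cover consists either of exactly five 2-element subsets,
or of exactly two 2-element subsets and exactly two 3-element subsets. -/
theorem pure_cover_shape (P : Finset (Finset (ℝ × ℝ))) (hP : IsPureCover P) :
    ((P.filter (fun S => S.card = 2)).card = 5 ∧
        (P.filter (fun S => S.card = 3)).card = 0) ∨
      ((P.filter (fun S => S.card = 2)).card = 2 ∧
        (P.filter (fun S => S.card = 3)).card = 2) := by
  obtain ⟨h1, h2⟩ := hP
  have hunion : P.biUnion id = hexV := by
    apply Finset.Subset.antisymm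
    · intro v hv
      simp only [Finset.mem_biUnion, id] at hv
      obtain ⟨S, hS, hvS⟩ := hv
      exact (h1 S hS).1 hvS
    · intro v hv
      obtain ⟨S, ⟨hS, hvS⟩, _⟩ := h2 v hv
      exact Finset.mem_biUnion.2 ⟨S, hS, hvS⟩
  have hsum : ∑ S ∈ P, S.card = 10 := by
    have hd : ∀ S ∈ P, ∀ T ∈ P, S ≠ T → Disjoint (id S) (id T) := by
      intro S hS T hT hne
      simp only [id]
      rw [Finset.disjoint_left]
      intro v hvS hvT
      obtain ⟨U, _, hUuniq⟩ := h2 v ((h1 S hS).1 hvS)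
      exact hne ((hUuniq S ⟨hS, hvS⟩).trans (hUuniq T ⟨hT, hvT⟩).symm)
    have := Finset.card_biUnion hd
    rw [hunion, hexV_card] at this
    simpa using this.symm
  have hsplit : ∑ S ∈ P.filter (fun S => S.card = 2), S.card
      + ∑ S ∈ P.filter (fun S => ¬ S.card = 2), S.card = 10 := by
    rw [Finset.sum_filter_add_sum_filter_not]
    exact hsum
  have hfilter_eq : P.filter (fun S => ¬ S.card = 2) = P.filter (fun S => S.card = 3) := by
    apply Finset.filter_congr
    intro S hS
    rcases (h1 S hS).2.1 with h | h <;> simp [h]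
  have h2sum : ∑ S ∈ P.filter (fun S => S.card = 2), S.card
      = 2 * (P.filter (fun S => S.card = 2)).card := by
    rw [Finset.sum_congr rfl (fun S hS => (Finset.mem_filter.1 hS).2),
        Finset.sum_const, smul_eq_mul, mul_comm]
  have h3sum : ∑ S ∈ P.filter (fun S => S.card = 3), S.card
      = 3 * (P.filter (fun S => S.card = 3)).card := by
    rw [Finset.sum_congr rfl (fun S hS => (Finset.mem_filter.1 hS).2),
        Finset.sum_const, smul_eq_mul, mul_comm]
  rw [hfilter_eq, h2sum, h3sum] at hsplit
  omega
end

section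
/- Let c ∈ ℝ and w ∈ (0,1). If c ≤ 3·w^{1/3} + 2·(1−w)^{1/2}, then g(x,y) = x^4·y^2 + x^2 + y + 1 − c·x^2·y satisfies g(x,y) ≥ 0 for all x > 0, y > 0. -/
/-- The weighted-cover sufficient condition for nonnegativity of
`g(x,y) = x⁴y² + x² + y + 1 − c·x²y` on the positive orthant. -/
theorem weighted_cover_example (c w : ℝ) (hw0 : 0 < w) (hw1 : w < 1)
    (hc : c ≤ 3 * w ^ ((1 : ℝ) / 3) + 2 * (1 - w) ^ ((1 : ℝ) / 2)) :
    ∀ x y : ℝ, 0 < x → 0 < y →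
      0 ≤ x ^ 4 * y ^ 2 + x ^ 2 + y + 1 - c * x ^ 2 * y := by
  intro x y hx hy
  set A : ℝ := x ^ 2 * y with hA
  have hApos : 0 < A := by positivity
  have hAnn : (0:ℝ) ≤ A := hApos.le
  -- three-term AM-GM
  have h1 : (w * x ^ 4 * y ^ 2) ^ ((1:ℝ)/3) * (x ^ 2) ^ ((1:ℝ)/3) * y ^ ((1:ℝ)/3)
      ≤ (1:ℝ)/3 * (w * x ^ 4 * y ^ 2) + (1:ℝ)/3 * x ^ 2 + (1:ℝ)/3 * y := by
    apply Real.geom_mean_le_arith_mean3_weighted <;> try norm_num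
    · positivity
    · positivity
    · positivity
  have hprod : (w * x ^ 4 * y ^ 2) ^ ((1:ℝ)/3) * (x ^ 2) ^ ((1:ℝ)/3) * y ^ ((1:ℝ)/3)
      = w ^ ((1:ℝ)/3) * A := by
    have h6 : (w * x ^ 4 * y ^ 2) ^ ((1:ℝ)/3) * (x ^ 2) ^ ((1:ℝ)/3) * y ^ ((1:ℝ)/3)
        = (w * x ^ 4 * y ^ 2 * (x ^ 2) * y) ^ ((1:ℝ)/3) := by
      rw [← Real.mul_rpow (by positivity) (by positivity),
        ← Real.mul_rpow (by positivity) (by positivity)]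
    rw [h6]
    have hform : w * x ^ 4 * y ^ 2 * (x ^ 2) * y = w * A ^ 3 := by
      rw [hA]; ring
    rw [hform, Real.mul_rpow hw0.le (by positivity)]
    congr 1
    rw [← Real.rpow_natCast A 3, ← Real.rpow_mul hAnn]
    norm_num
  -- two-term AM-GM
  have h2 : ((1 - w) * x ^ 4 * y ^ 2) ^ ((1:ℝ)/2) * (1:ℝ) ^ ((1:ℝ)/2)
      ≤ (1:ℝ)/2 * ((1 - w) * x ^ 4 * y ^ 2) + (1:ℝ)/2 * 1 := by
    apply Real.geom_mean_le_arith_mean2_weighted <;> try norm_num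
    nlinarith [pow_pos hx 4, pow_pos hy 2, mul_pos (pow_pos hx 4) (pow_pos hy 2)]
  have hprod2 : ((1 - w) * x ^ 4 * y ^ 2) ^ ((1:ℝ)/2) = (1 - w) ^ ((1:ℝ)/2) * A := by
    have hform : (1 - w) * x ^ 4 * y ^ 2 = (1 - w) * A ^ 2 := by rw [hA]; ring
    rw [hform, Real.mul_rpow (by linarith) (by positivity)]
    congr 1
    rw [← Real.rpow_natCast A 2, ← Real.rpow_mul hAnn]
    norm_num
  rw [hprod] at h1
  rw [hprod2, Real.one_rpow, mul_one] at h2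
  have hcA : c * x ^ 2 * y = c * A := by rw [hA]; ring
  have hcle : c * A ≤ (3 * w ^ ((1:ℝ)/3) + 2 * (1 - w) ^ ((1:ℝ)/2)) * A :=
    mul_le_mul_of_nonneg_right hc hAnn
  nlinarith [h1, h2, hcle]
end
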